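/- arXiv:1608.01528 — 2 statements merged into one kernel-verified Lean document; each statement's English description precedes it below -/
import Mathlib

section
/- For every causal tripartite correlation P(a,b,c|x,y,z) with binary inputs x,y,z ∈ {0,1} and binary outputs a,b,c ∈ {0,1}, the causal inequality I_2 ≥ 0 holds, where I_2 = P_A(1|1,0,0) + P_B(1|0,1,0) + P_C(1|0,0,1) − P(1,1,1|1,1,1), with P_A(a|x,y,z) := Σ_{b,c} P(a,b,c|x,y,z), P_B(b|x,y,z) := Σ_{a,c} P(a,b,c|x,y,z), and P_C(c|x,y,z) := Σ_{a,b} P(a,b,c|x,y,z). -/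
/-- A correlation for the parties in the finite set `S`, where party `i` has input set `X i`
and output set `A i`: a real number `P x a` for each assignment of inputs `x` and outputs `a`
for the parties in `S`. -/
def Corr {ι : Type} (X A : ι → Type) (S : Finset ι) : Type :=
  ((i : {j // j ∈ S}) → X i.1) → ((i : {j // j ∈ S}) → A i.1) → ℝ

/-- `p` is a probability distribution on the finite type `α`. -/
def IsProbDist {α : Type} [Fintype α] (p : α → ℝ) : Prop :=
  (∀ a, 0 ≤ p a) ∧ ∑ a, p a = 1

/-- Restriction of a tuple indexed by `S` to a subset `T ⊆ S`. -/
def restr {ι : Type} {X : ι → Type} {S T : Finset ι} (h : T ⊆ S)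
    (x : (i : {j // j ∈ S}) → X i.1) : (i : {j // j ∈ T}) → X i.1 :=
  fun i => x ⟨i.1, h i.2⟩

theorem erase_sub {ι : Type} [DecidableEq ι] (S : Finset ι) (k : ι) : S.erase k ⊆ S :=
  fun _ hi => Finset.mem_of_mem_erase hi

theorem sdiff_sub {ι : Type} [DecidableEq ι] (S K : Finset ι) : S \ K ⊆ S :=
  fun _ hi => (Finset.mem_sdiff.mp hi).1

/-- Combine a tuple on `K` and a tuple on `S \ K` into a tuple on `S`. -/
def glue {ι : Type} [DecidableEq ι] {X : ι → Type} {S K : Finset ι} (_ : K ⊆ S)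
    (u : (i : {j // j ∈ K}) → X i.1) (v : (i : {j // j ∈ S \ K}) → X i.1) :
    (i : {j // j ∈ S}) → X i.1 :=
  fun i => if h : i.1 ∈ K then u ⟨i.1, h⟩ else v ⟨i.1, Finset.mem_sdiff.mpr ⟨i.2, h⟩⟩

/-- Insert a value for party `k` into a tuple on `S.erase k`, giving a tuple on `S`. -/
def ins {ι : Type} [DecidableEq ι] {X : ι → Type} {S : Finset ι} {k : ι} (_ : k ∈ S)
    (xk : X k) (u : (i : {j // j ∈ S.erase k}) → X i.1) : (i : {j // j ∈ S}) → X i.1 :=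
  fun i => if h : i.1 = k then cast (congrArg X h.symm) xk
    else u ⟨i.1, Finset.mem_erase.mpr ⟨h, i.2⟩⟩

section split
variable {ι : Type} [DecidableEq ι] {X : ι → Type} {S : Finset ι} {k : ι} (hk : k ∈ S)

lemma restr_ins (xk : X k) (u) : restr (erase_sub S k) (ins hk xk u) = u := by
  funext i
  simp only [restr, ins]
  rw [dif_neg (Finset.mem_erase.mp i.2).1]

lemma ins_apply_self (xk : X k) (u) : ins hk xk u ⟨k, hk⟩ = xk :=
  (dif_pos rfl).trans (eq_of_heq (cast_heq _ _))

lemma ins_apply_self' {kk : {j // j ∈ S}} (xk : X kk.1) (u) : ins kk.2 xk u kk = xk :=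
  ins_apply_self kk.2 xk u

lemma ins_restr (a : (i : {j // j ∈ S}) → X i.1) :
    ins hk (a ⟨k, hk⟩) (restr (erase_sub S k) a) = a := by
  funext i
  obtain ⟨i, hi⟩ := i
  by_cases h : i = k
  · subst h
    exact ins_apply_self hk _ _
  · simp only [ins]
    rw [dif_neg h]
    rfl

def splitEquiv : ((i : {j // j ∈ S}) → X i.1) ≃ (X k × ((i : {j // j ∈ S.erase k}) → X i.1)) where
  toFun a := (a ⟨k, hk⟩, restr (erase_sub S k) a)
  invFun p := ins hk p.1 p.2
  left_inv a := ins_restr hk a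
  right_inv p := by
    obtain ⟨xk, u⟩ := p
    simp only [ins_apply_self, restr_ins]

lemma sum_split [∀ i, Fintype (X i)] (f : ((i : {j // j ∈ S}) → X i.1) → ℝ) :
    ∑ a, f a = ∑ xk : X k, ∑ u, f (ins hk xk u) := by
  rw [← Equiv.sum_comp (splitEquiv hk).symm f, Fintype.sum_prod_type]
  rfl

end split

/-- Causal correlations, defined by induction on the number of parties: any single-party
probability distribution is causal; a correlation on a set `S` of at least two parties is
causal iff it is a convex combination, over choices of a party `k ∈ S` acting first, of
products of a single-party distribution for `k` with causal correlations for the remaining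
parties `S.erase k` that may depend on the input and output of party `k`. -/
inductive IsCausal {ι : Type} [DecidableEq ι] (X A : ι → Type) [∀ i, Fintype (A i)] :
    (S : Finset ι) → Corr X A S → Prop
  | base (k : ι) (P : Corr X A {k}) (hP : ∀ x, IsProbDist (P x)) : IsCausal X A {k} P
  | step (S : Finset ι) (hS : 2 ≤ S.card) (P : Corr X A S)
      (q : {j // j ∈ S} → ℝ)
      (Pfirst : (k : {j // j ∈ S}) → X k.1 → A k.1 → ℝ)
      (Prest : (k : {j // j ∈ S}) → X k.1 → A k.1 → Corr X A (S.erase k.1))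
      (hq : ∀ k, 0 ≤ q k)
      (hq1 : ∑ k ∈ S.attach, q k = 1)
      (hPfirst : ∀ k xk, IsProbDist (Pfirst k xk))
      (hPrest : ∀ k xk ak, IsCausal X A (S.erase k.1) (Prest k xk ak))
      (hP : ∀ x a, P x a = ∑ k ∈ S.attach, q k * Pfirst k (x k) (a k) *
            Prest k (x k) (a k) (restr (erase_sub S k.1) x) (restr (erase_sub S k.1) a)) :
      IsCausal X A S P

lemma isCausal_probDist {ι : Type} [DecidableEq ι] {X A : ι → Type} [∀ i, Fintype (A i)]
    {S : Finset ι} {P : Corr X A S} (h : IsCausal X A S P) :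
    ∀ x, IsProbDist (P x) := by
  induction h with
  | base k P hP => exact hP
  | step S hS P q Pfirst Prest hq hq1 hPfirst hPrest hP ih =>
    intro x
    have inner : ∀ k : {j // j ∈ S}, ∑ a, q k * Pfirst k (x k) (a k) *
        Prest k (x k) (a k) (restr (erase_sub S k.1) x) (restr (erase_sub S k.1) a) = q k := by
      intro k
      rw [sum_split k.2]
      simp only [ins_apply_self', restr_ins]
      simp_rw [← Finset.mul_sum, (fun xk => (ih k (x k) xk (restr (erase_sub S k.1) x)).2),
        mul_one]
      rw [← Finset.mul_sum, (hPfirst k (x k)).2, mul_one]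
    constructor
    · intro a
      rw [hP]
      refine Finset.sum_nonneg fun k _ => ?_
      exact mul_nonneg (mul_nonneg (hq k) ((hPfirst k (x k)).1 (a k)))
        ((ih k (x k) (a k) (restr (erase_sub S k.1) x)).1 _)
    · simp only [hP]
      rw [Finset.sum_comm]
      rw [Finset.sum_congr rfl fun k _ => inner k]
      exact hq1

lemma probDist_le_one {α : Type} [Fintype α] {p : α → ℝ} (h : IsProbDist p) (a : α) : p a ≤ 1 := by
  rw [← h.2]
  exact Finset.single_le_sum (fun b _ => h.1 b) (Finset.mem_univ a)

/-- Tripartite correlations with binary inputs and binary outputs for the three parties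
`A`, `B`, `C` (encoding input/output `0` as `false` and `1` as `true`). -/
abbrev Corr3 : Type := Corr (fun _ : Fin 3 => Bool) (fun _ : Fin 3 => Bool) Finset.univ

/-- The triple `(u, v, w)` as an input (or output) assignment for the three parties. -/
def t3 (u v w : Bool) : (i : {j // j ∈ (Finset.univ : Finset (Fin 3))}) → Bool :=
  fun i => ![u, v, w] i.1

-- membership proofs
lemma m0 : (0 : Fin 3) ∈ (Finset.univ : Finset (Fin 3)) := Finset.mem_univ _
lemma m1 : (1 : Fin 3) ∈ (Finset.univ : Finset (Fin 3)) := Finset.mem_univ _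
lemma m2 : (2 : Fin 3) ∈ (Finset.univ : Finset (Fin 3)) := Finset.mem_univ _

lemma hattach (f : {j // j ∈ (Finset.univ : Finset (Fin 3))} → ℝ) :
    ∑ k ∈ Finset.univ.attach, f k = f ⟨0, m0⟩ + f ⟨1, m1⟩ + f ⟨2, m2⟩ := by
  have h1 : (Finset.univ : Finset (Fin 3)).attach
      = (Finset.univ : Finset {j // j ∈ (Finset.univ : Finset (Fin 3))}) :=
    Finset.ext fun a => by simp
  rw [h1, Fintype.sum_equiv (Equiv.subtypeUnivEquiv (fun i => Finset.mem_univ i)) f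
      (fun i => f ⟨i, Finset.mem_univ i⟩) (fun x => rfl)]
  exact Fin.sum_univ_three _

-- equivalences for each party acting first
def eA : Bool × Bool ≃ ((i : {j // j ∈ (Finset.univ : Finset (Fin 3)).erase 0}) → Bool) where
  toFun p := restr (X := fun _ => Bool) (erase_sub (Finset.univ : Finset (Fin 3)) 0) (t3 true p.1 p.2)
  invFun u := (u ⟨1, by decide⟩, u ⟨2, by decide⟩)
  left_inv p := rfl
  right_inv u := by
    funext i
    obtain ⟨i, hi⟩ := i
    fin_cases i
    · simp at hi
    · rfl
    · rfl

def eB : Bool × Bool ≃ ((i : {j // j ∈ (Finset.univ : Finset (Fin 3)).erase 1}) → Bool) where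
  toFun p := restr (X := fun _ => Bool) (erase_sub (Finset.univ : Finset (Fin 3)) 1) (t3 p.1 true p.2)
  invFun u := (u ⟨0, by decide⟩, u ⟨2, by decide⟩)
  left_inv p := rfl
  right_inv u := by
    funext i
    obtain ⟨i, hi⟩ := i
    fin_cases i
    · rfl
    · simp at hi
    · rfl

def eC : Bool × Bool ≃ ((i : {j // j ∈ (Finset.univ : Finset (Fin 3)).erase 2}) → Bool) where
  toFun p := restr (X := fun _ => Bool) (erase_sub (Finset.univ : Finset (Fin 3)) 2) (t3 p.1 p.2 true)
  invFun u := (u ⟨0, by decide⟩, u ⟨1, by decide⟩)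
  left_inv p := rfl
  right_inv u := by
    funext i
    obtain ⟨i, hi⟩ := i
    fin_cases i
    · rfl
    · rfl
    · simp at hi

lemma sumA (F : ((i : {j // j ∈ (Finset.univ : Finset (Fin 3)).erase 0}) → Bool) → ℝ) :
    ∑ b : Bool, ∑ c : Bool, F (restr (X := fun _ => Bool) (erase_sub (Finset.univ : Finset (Fin 3)) 0) (t3 true b c)) = ∑ u, F u := by
  rw [← Equiv.sum_comp eA F, Fintype.sum_prod_type]
  rfl

lemma sumB (F : ((i : {j // j ∈ (Finset.univ : Finset (Fin 3)).erase 1}) → Bool) → ℝ) :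
    ∑ a : Bool, ∑ c : Bool, F (restr (X := fun _ => Bool) (erase_sub (Finset.univ : Finset (Fin 3)) 1) (t3 a true c)) = ∑ u, F u := by
  rw [← Equiv.sum_comp eB F, Fintype.sum_prod_type]
  rfl

lemma sumC (F : ((i : {j // j ∈ (Finset.univ : Finset (Fin 3)).erase 2}) → Bool) → ℝ) :
    ∑ a : Bool, ∑ b : Bool, F (restr (X := fun _ => Bool) (erase_sub (Finset.univ : Finset (Fin 3)) 2) (t3 a b true)) = ∑ u, F u := by
  rw [← Equiv.sum_comp eC F, Fintype.sum_prod_type]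
  rfl

lemma t3_0 (u v w : Bool) (h : (0 : Fin 3) ∈ (Finset.univ : Finset (Fin 3))) :
    t3 u v w ⟨0, h⟩ = u := rfl
lemma t3_1 (u v w : Bool) (h : (1 : Fin 3) ∈ (Finset.univ : Finset (Fin 3))) :
    t3 u v w ⟨1, h⟩ = v := rfl
lemma t3_2 (u v w : Bool) (h : (2 : Fin 3) ∈ (Finset.univ : Finset (Fin 3))) :
    t3 u v w ⟨2, h⟩ = w := rfl

lemma isCausal_step_of_two_le {ι : Type} [DecidableEq ι] {X A : ι → Type} [∀ i, Fintype (A i)]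
    {S : Finset ι} {P : Corr X A S} (h : IsCausal X A S P) (hcard : 2 ≤ S.card) :
    ∃ (q : {j // j ∈ S} → ℝ) (Pfirst : (k : {j // j ∈ S}) → X k.1 → A k.1 → ℝ)
      (Prest : (k : {j // j ∈ S}) → X k.1 → A k.1 → Corr X A (S.erase k.1)),
      (∀ k, 0 ≤ q k) ∧ (∑ k ∈ S.attach, q k = 1) ∧ (∀ k xk, IsProbDist (Pfirst k xk)) ∧
      (∀ k xk ak, IsCausal X A (S.erase k.1) (Prest k xk ak)) ∧
      (∀ x a, P x a = ∑ k ∈ S.attach, q k * Pfirst k (x k) (a k) *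
            Prest k (x k) (a k) (restr (erase_sub S k.1) x) (restr (erase_sub S k.1) a)) := by
  cases h with
  | base k P hP => simp at hcard
  | step S hS P q Pfirst Prest hq hq1 hPfirst hPrest hP =>
      exact ⟨q, Pfirst, Prest, hq, hq1, hPfirst, hPrest, hP⟩

/-- every causal tripartite correlation with binary inputs and outputs
satisfies the causal inequality `I_2 ≥ 0`, i.e.,
`P_A(1|100) + P_B(1|010) + P_C(1|001) - P(111|111) ≥ 0`. -/
theorem causal_inequality_I2 (P : Corr3)
    (hP : IsCausal (fun _ : Fin 3 => Bool) (fun _ : Fin 3 => Bool) Finset.univ P) :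
    0 ≤ (∑ b : Bool, ∑ c : Bool, P (t3 true false false) (t3 true b c))
      + (∑ a : Bool, ∑ c : Bool, P (t3 false true false) (t3 a true c))
      + (∑ a : Bool, ∑ b : Bool, P (t3 false false true) (t3 a b true))
      - P (t3 true true true) (t3 true true true) := by
  obtain ⟨q, Pfirst, Prest, hq, hq1, hPfirst, hPrest, hP'⟩ :=
    isCausal_step_of_two_le hP (by simp)
  simp only [hP', hattach, t3_0, t3_1, t3_2]
  have hnn : ∀ (k : {j // j ∈ (Finset.univ : Finset (Fin 3))}) (xk ak : Bool) xr ar,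
      0 ≤ q k * Pfirst k xk ak * Prest k xk ak xr ar :=
    fun k xk ak xr ar => mul_nonneg (mul_nonneg (hq k) ((hPfirst k xk).1 ak))
      ((isCausal_probDist (hPrest k xk ak) xr).1 ar)
  have hle : ∀ (k : {j // j ∈ (Finset.univ : Finset (Fin 3))}) (xk ak : Bool) xr ar,
      q k * Pfirst k xk ak * Prest k xk ak xr ar ≤ q k * Pfirst k xk ak :=
    fun k xk ak xr ar => mul_le_of_le_one_right
      (mul_nonneg (hq k) ((hPfirst k xk).1 ak))
      (probDist_le_one (isCausal_probDist (hPrest k xk ak) xr) ar)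
  simp only [Finset.sum_add_distrib]
  have eA1 : ∑ b : Bool, ∑ c : Bool, q ⟨0, m0⟩ * Pfirst ⟨0, m0⟩ true true *
      Prest ⟨0, m0⟩ true true (restr (X := fun _ => Bool) (erase_sub (Finset.univ : Finset (Fin 3)) 0) (t3 true false false))
        (restr (X := fun _ => Bool) (erase_sub (Finset.univ : Finset (Fin 3)) 0) (t3 true b c))
      = q ⟨0, m0⟩ * Pfirst ⟨0, m0⟩ true true := by
    simp_rw [← Finset.mul_sum]
    rw [sumA, (isCausal_probDist (hPrest ⟨0, m0⟩ true true) _).2, mul_one]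
  have eB1 : ∑ a : Bool, ∑ c : Bool, q ⟨1, m1⟩ * Pfirst ⟨1, m1⟩ true true *
      Prest ⟨1, m1⟩ true true (restr (X := fun _ => Bool) (erase_sub (Finset.univ : Finset (Fin 3)) 1) (t3 false true false))
        (restr (X := fun _ => Bool) (erase_sub (Finset.univ : Finset (Fin 3)) 1) (t3 a true c))
      = q ⟨1, m1⟩ * Pfirst ⟨1, m1⟩ true true := by
    simp_rw [← Finset.mul_sum]
    rw [sumB, (isCausal_probDist (hPrest ⟨1, m1⟩ true true) _).2, mul_one]
  have eC1 : ∑ a : Bool, ∑ b : Bool, q ⟨2, m2⟩ * Pfirst ⟨2, m2⟩ true true *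
      Prest ⟨2, m2⟩ true true (restr (X := fun _ => Bool) (erase_sub (Finset.univ : Finset (Fin 3)) 2) (t3 false false true))
        (restr (X := fun _ => Bool) (erase_sub (Finset.univ : Finset (Fin 3)) 2) (t3 a b true))
      = q ⟨2, m2⟩ * Pfirst ⟨2, m2⟩ true true := by
    simp_rw [← Finset.mul_sum]
    rw [sumC, (isCausal_probDist (hPrest ⟨2, m2⟩ true true) _).2, mul_one]
  rw [eA1, eB1, eC1]
  have n1 : (0:ℝ) ≤ ∑ b : Bool, ∑ c : Bool, q ⟨1, m1⟩ * Pfirst ⟨1, m1⟩ false b *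
      Prest ⟨1, m1⟩ false b (restr (X := fun _ => Bool) (erase_sub (Finset.univ : Finset (Fin 3)) 1) (t3 true false false))
        (restr (X := fun _ => Bool) (erase_sub (Finset.univ : Finset (Fin 3)) 1) (t3 true b c)) :=
    Finset.sum_nonneg fun b _ => Finset.sum_nonneg fun c _ => hnn _ _ _ _ _
  have n2 : (0:ℝ) ≤ ∑ b : Bool, ∑ c : Bool, q ⟨2, m2⟩ * Pfirst ⟨2, m2⟩ false c *
      Prest ⟨2, m2⟩ false c (restr (X := fun _ => Bool) (erase_sub (Finset.univ : Finset (Fin 3)) 2) (t3 true false false))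
        (restr (X := fun _ => Bool) (erase_sub (Finset.univ : Finset (Fin 3)) 2) (t3 true b c)) :=
    Finset.sum_nonneg fun b _ => Finset.sum_nonneg fun c _ => hnn _ _ _ _ _
  have n3 : (0:ℝ) ≤ ∑ a : Bool, ∑ c : Bool, q ⟨0, m0⟩ * Pfirst ⟨0, m0⟩ false a *
      Prest ⟨0, m0⟩ false a (restr (X := fun _ => Bool) (erase_sub (Finset.univ : Finset (Fin 3)) 0) (t3 false true false))
        (restr (X := fun _ => Bool) (erase_sub (Finset.univ : Finset (Fin 3)) 0) (t3 a true c)) :=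
    Finset.sum_nonneg fun a _ => Finset.sum_nonneg fun c _ => hnn _ _ _ _ _
  have n4 : (0:ℝ) ≤ ∑ a : Bool, ∑ c : Bool, q ⟨2, m2⟩ * Pfirst ⟨2, m2⟩ false c *
      Prest ⟨2, m2⟩ false c (restr (X := fun _ => Bool) (erase_sub (Finset.univ : Finset (Fin 3)) 2) (t3 false true false))
        (restr (X := fun _ => Bool) (erase_sub (Finset.univ : Finset (Fin 3)) 2) (t3 a true c)) :=
    Finset.sum_nonneg fun a _ => Finset.sum_nonneg fun c _ => hnn _ _ _ _ _
  have n5 : (0:ℝ) ≤ ∑ a : Bool, ∑ b : Bool, q ⟨0, m0⟩ * Pfirst ⟨0, m0⟩ false a *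
      Prest ⟨0, m0⟩ false a (restr (X := fun _ => Bool) (erase_sub (Finset.univ : Finset (Fin 3)) 0) (t3 false false true))
        (restr (X := fun _ => Bool) (erase_sub (Finset.univ : Finset (Fin 3)) 0) (t3 a b true)) :=
    Finset.sum_nonneg fun a _ => Finset.sum_nonneg fun b _ => hnn _ _ _ _ _
  have n6 : (0:ℝ) ≤ ∑ a : Bool, ∑ b : Bool, q ⟨1, m1⟩ * Pfirst ⟨1, m1⟩ false b *
      Prest ⟨1, m1⟩ false b (restr (X := fun _ => Bool) (erase_sub (Finset.univ : Finset (Fin 3)) 1) (t3 false false true))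
        (restr (X := fun _ => Bool) (erase_sub (Finset.univ : Finset (Fin 3)) 1) (t3 a b true)) :=
    Finset.sum_nonneg fun a _ => Finset.sum_nonneg fun b _ => hnn _ _ _ _ _
  have d1 := hle ⟨0, m0⟩ true true (restr (X := fun _ => Bool) (erase_sub (Finset.univ : Finset (Fin 3)) 0) (t3 true true true))
    (restr (X := fun _ => Bool) (erase_sub (Finset.univ : Finset (Fin 3)) 0) (t3 true true true))
  have d2 := hle ⟨1, m1⟩ true true (restr (X := fun _ => Bool) (erase_sub (Finset.univ : Finset (Fin 3)) 1) (t3 true true true))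
    (restr (X := fun _ => Bool) (erase_sub (Finset.univ : Finset (Fin 3)) 1) (t3 true true true))
  have d3 := hle ⟨2, m2⟩ true true (restr (X := fun _ => Bool) (erase_sub (Finset.univ : Finset (Fin 3)) 2) (t3 true true true))
    (restr (X := fun _ => Bool) (erase_sub (Finset.univ : Finset (Fin 3)) 2) (t3 true true true))
  linarith
end

section
/- For every N ≥ 2 and every causal N-partite correlation P with binary inputs x_k ∈ {0,1} and binary outputs a_k ∈ {0,1} for each party, the generalized causal inequality J_1(N) ≥ 0 holds, where J_1(N) = Σ_{k=1}^N P_{N∖k}(1,…,1 | x_k = 0, x_{∖k} = (1,…,1)) − P(1,…,1 | 1,…,1), with P_{N∖k}(a_{∖k}|x) := Σ_{a_k} P(a|x) denoting the marginal distribution over the outputs of all parties except party k. -/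
lemma causal_nonneg {ι : Type} [DecidableEq ι] {X A : ι → Type} [∀ i, Fintype (A i)]
    {S : Finset ι} {P : Corr X A S} (h : IsCausal X A S P) :
    ∀ x a, 0 ≤ P x a := by
  induction h with
  | base k P hP => exact fun x a => (hP x).1 a
  | step S hS P q Pf Pr hq hq1 hPf hPr hP ih =>
    intro x a
    rw [hP]
    refine Finset.sum_nonneg fun k _ => ?_
    exact mul_nonneg (mul_nonneg (hq k) ((hPf k (x k)).1 (a k))) (ih k (x k) (a k) _ _)

lemma causal_J1_aux {ι : Type} [DecidableEq ι] {S : Finset ι}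
    {P : Corr (fun _ : ι => Bool) (fun _ : ι => Bool) S}
    (h : IsCausal (fun _ : ι => Bool) (fun _ : ι => Bool) S P) :
    P (fun _ => true) (fun _ => true) ≤
      ∑ k ∈ S.attach, ∑ ak : Bool,
        P (fun i => if i.1 = k.1 then false else true)
          (fun i => if i.1 = k.1 then ak else true) := by
  induction h with
  | base k P hP =>
    haveI : Unique {j // j ∈ ({k} : Finset ι)} :=
      ⟨⟨⟨k, Finset.mem_singleton_self k⟩⟩, fun a => Subtype.ext (Finset.mem_singleton.mp a.2)⟩
    have hsum : ∀ (x : (i : {j // j ∈ ({k} : Finset ι)}) → Bool),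
        ∑ ak : Bool, P x (fun _ => ak) = 1 := by
      intro x
      rw [← (hP x).2]
      exact Fintype.sum_equiv (Equiv.funUnique {j // j ∈ ({k} : Finset ι)} Bool).symm _ _
        (fun b => rfl)
    have h1 : P (fun _ => true) (fun _ => true) ≤ ∑ a, P (fun _ => true) a :=
      Finset.single_le_sum (fun a _ => (hP _).1 a) (Finset.mem_univ _)
    rw [Finset.sum_attach ({k} : Finset ι) (fun c => ∑ ak : Bool,
        P (fun i => if i.1 = c then false else true) (fun i => if i.1 = c then ak else true)),
      Finset.sum_singleton]
    have hx : (fun i : {j // j ∈ ({k} : Finset ι)} => if i.1 = k then false else true)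
        = fun _ => false := funext fun i => by simp [Finset.mem_singleton.mp i.2]
    have ha : ∀ ak : Bool, (fun i : {j // j ∈ ({k} : Finset ι)} => if i.1 = k then ak else true)
        = fun _ => ak := fun ak => funext fun i => by simp [Finset.mem_singleton.mp i.2]
    calc P (fun _ => true) (fun _ => true) ≤ ∑ a, P (fun _ => true) a := h1
      _ = 1 := (hP _).2
      _ = ∑ ak : Bool, P (fun _ => false) (fun _ => ak) := (hsum _).symm
      _ = _ := by
          refine Finset.sum_congr rfl fun ak _ => ?_
          rw [hx, ha ak]
  | step S hS P q Pf Pr hq hq1 hPf hPr hP ih =>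
    simp only [hP, restr]
    have key : ∀ j ∈ S.attach,
        q j * Pf j true true * Pr j true true (fun _ => true) (fun _ => true) ≤
        ∑ k ∈ S.attach, ∑ ak : Bool,
          q j * Pf j (if j.1 = k.1 then false else true) (if j.1 = k.1 then ak else true) *
          Pr j (if j.1 = k.1 then false else true) (if j.1 = k.1 then ak else true)
            (fun i => if i.1 = k.1 then false else true)
            (fun i => if i.1 = k.1 then ak else true) := by
      intro j _
      have hnn : ∀ xj aj x a, (0:ℝ) ≤ Pr j xj aj x a :=
        fun xj aj x a => causal_nonneg (hPr j xj aj) x a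
      have hqp : 0 ≤ q j * Pf j true true :=
        mul_nonneg (hq j) ((hPf j true).1 true)
      have step1 : ∑ k ∈ S.attach.erase j, ∑ ak : Bool,
          q j * Pf j (if j.1 = k.1 then false else true) (if j.1 = k.1 then ak else true) *
          Pr j (if j.1 = k.1 then false else true) (if j.1 = k.1 then ak else true)
            (fun i => if i.1 = k.1 then false else true)
            (fun i => if i.1 = k.1 then ak else true) ≤
          ∑ k ∈ S.attach, ∑ ak : Bool,
          q j * Pf j (if j.1 = k.1 then false else true) (if j.1 = k.1 then ak else true) *
          Pr j (if j.1 = k.1 then false else true) (if j.1 = k.1 then ak else true)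
            (fun i => if i.1 = k.1 then false else true)
            (fun i => if i.1 = k.1 then ak else true) := by
        refine Finset.sum_le_sum_of_subset_of_nonneg (Finset.erase_subset _ _)
          fun k _ _ => Finset.sum_nonneg fun ak _ => ?_
        exact mul_nonneg (mul_nonneg (hq j) ((hPf j _).1 _)) (hnn _ _ _ _)
      have step2 : ∑ k ∈ S.attach.erase j, ∑ ak : Bool,
          q j * Pf j (if j.1 = k.1 then false else true) (if j.1 = k.1 then ak else true) *
          Pr j (if j.1 = k.1 then false else true) (if j.1 = k.1 then ak else true)
            (fun i => if i.1 = k.1 then false else true)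
            (fun i => if i.1 = k.1 then ak else true)
          = q j * Pf j true true *
            ∑ k ∈ S.attach.erase j, ∑ ak : Bool,
              Pr j true true (fun i => if i.1 = k.1 then false else true)
                (fun i => if i.1 = k.1 then ak else true) := by
        rw [Finset.mul_sum]
        refine Finset.sum_congr rfl fun k hk => ?_
        have hne : ¬ (j.1 = k.1) := fun h => (Finset.mem_erase.mp hk).1 (Subtype.ext h.symm)
        rw [Finset.mul_sum]
        refine Finset.sum_congr rfl fun ak _ => ?_
        simp only [if_neg hne]
      have hre : ∀ F : ι → ℝ,
          ∑ k ∈ S.attach.erase j, F k.1 = ∑ k ∈ (S.erase j.1).attach, F k.1 := by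
        intro F
        have h1 : ∑ k ∈ (S.erase j.1).attach, F k.1 = ∑ c ∈ S.erase j.1, F c :=
          Finset.sum_attach _ _
        have h2 : ∑ k ∈ S.attach.erase j, F k.1 + F j.1 = ∑ c ∈ S, F c := by
          rw [Finset.sum_erase_add _ _ (Finset.mem_attach _ _), Finset.sum_attach]
        have h3 : ∑ c ∈ S.erase j.1, F c + F j.1 = ∑ c ∈ S, F c :=
          Finset.sum_erase_add _ _ j.2
        linarith
      have step3 : ∑ k ∈ S.attach.erase j, ∑ ak : Bool,
            Pr j true true (fun i => if i.1 = k.1 then false else true)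
              (fun i => if i.1 = k.1 then ak else true)
          = ∑ k ∈ (S.erase j.1).attach, ∑ ak : Bool,
            Pr j true true (fun i => if i.1 = k.1 then false else true)
              (fun i => if i.1 = k.1 then ak else true) :=
        hre (fun c => ∑ ak : Bool,
            Pr j true true (fun i => if i.1 = c then false else true)
              (fun i => if i.1 = c then ak else true))
      have step4 := ih j true true
      calc q j * Pf j true true * Pr j true true (fun _ => true) (fun _ => true)
          ≤ q j * Pf j true true *
            ∑ k ∈ (S.erase j.1).attach, ∑ ak : Bool,
              Pr j true true (fun i => if i.1 = k.1 then false else true)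
                (fun i => if i.1 = k.1 then ak else true) :=
            mul_le_mul_of_nonneg_left step4 hqp
        _ = _ := by rw [← step3, ← step2]
        _ ≤ _ := step1
    calc ∑ k ∈ S.attach,
          q k * Pf k true true * Pr k true true (fun _ => true) (fun _ => true)
        ≤ ∑ j ∈ S.attach, ∑ k ∈ S.attach, ∑ ak : Bool,
          q j * Pf j (if j.1 = k.1 then false else true) (if j.1 = k.1 then ak else true) *
          Pr j (if j.1 = k.1 then false else true) (if j.1 = k.1 then ak else true)
            (fun i => if i.1 = k.1 then false else true)
            (fun i => if i.1 = k.1 then ak else true) := Finset.sum_le_sum key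
      _ = _ := by
          rw [Finset.sum_comm]
          exact Finset.sum_congr rfl fun k _ => Finset.sum_comm

/-- every causal `N`-partite correlation with binary inputs and outputs
satisfies the generalized causal inequality `J_1(N) ≥ 0`, i.e.,
`Σ_k P_{N∖k}(1,…,1 | x_k = 0, x_{∖k} = (1,…,1)) - P(1,…,1 | 1,…,1) ≥ 0`,
encoding `0` as `false` and `1` as `true`. -/
theorem causal_inequality_J1 (N : ℕ) (hN : 2 ≤ N)
    (P : Corr (fun _ : Fin N => Bool) (fun _ : Fin N => Bool) Finset.univ)
    (hP : IsCausal (fun _ : Fin N => Bool) (fun _ : Fin N => Bool) Finset.univ P) :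
    0 ≤ (∑ k : Fin N, ∑ ak : Bool,
        P (fun i => if i.1 = k then false else true)
          (fun i => if i.1 = k then ak else true))
      - P (fun _ => true) (fun _ => true) := by
  rw [sub_nonneg]
  have h := causal_J1_aux hP
  calc P (fun _ => true) (fun _ => true)
      ≤ ∑ k ∈ (Finset.univ : Finset (Fin N)).attach, ∑ ak : Bool,
          P (fun i => if i.1 = k.1 then false else true)
            (fun i => if i.1 = k.1 then ak else true) := h
    _ = _ := Finset.sum_attach (Finset.univ : Finset (Fin N)) (fun c => ∑ ak : Bool,
        P (fun i => if i.1 = c then false else true) (fun i => if i.1 = c then ak else true))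
end
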